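/- Let H₁, H₂ be Hilbert spaces and E, E₊, E₋, E₊₋, P, R₊, R₋ bounded operators such that the block operator 𝒫 = [[P, R₋],[R₊, 0]] : H₁ ⊕ H₂ → H₁ ⊕ H₂ is invertible with inverse ℰ = [[E, E₊],[E₋, E₊₋]]. Then P is invertible if and only if E₊₋ is invertible, and in that case P⁻¹ = E − E₊ E₊₋⁻¹ E₋. -/
import Mathlib


/-- Schur complement formula for the block operator `[[P, R₋], [R₊, 0]]` with inverse
`[[E, E₊], [E₋, E₊₋]]` : `P` is invertible iff `E₊₋` is, and then
`P⁻¹ = E - E₊ E₊₋⁻¹ E₋`. The eight hypotheses are the block relations expressing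
`𝒫 ∘ ℰ = Id` and `ℰ ∘ 𝒫 = Id`. -/
theorem stmt_4 {H₁ H₂ : Type*}
    [NormedAddCommGroup H₁] [InnerProductSpace ℂ H₁] [CompleteSpace H₁]
    [NormedAddCommGroup H₂] [InnerProductSpace ℂ H₂] [CompleteSpace H₂]
    (P : H₁ →L[ℂ] H₁) (Rm : H₂ →L[ℂ] H₁) (Rp : H₁ →L[ℂ] H₂)
    (E : H₁ →L[ℂ] H₁) (Ep : H₂ →L[ℂ] H₁) (Em : H₁ →L[ℂ] H₂) (Epm : H₂ →L[ℂ] H₂)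
    (h1 : P.comp E + Rm.comp Em = 1)
    (h2 : P.comp Ep + Rm.comp Epm = 0)
    (h3 : Rp.comp E = 0)
    (h4 : Rp.comp Ep = 1)
    (h5 : E.comp P + Ep.comp Rp = 1)
    (h6 : E.comp Rm = 0)
    (h7 : Em.comp P + Epm.comp Rp = 0)
    (h8 : Em.comp Rm = 1) :
    (IsUnit P ↔ IsUnit Epm) ∧
      (IsUnit Epm → Ring.inverse P = E - Ep.comp ((Ring.inverse Epm).comp Em)) := by
  have H1 : ∀ x, P (E x) + Rm (Em x) = x := fun x => by
    simpa using ContinuousLinearMap.ext_iff.mp h1 x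
  have H2 : ∀ y, P (Ep y) + Rm (Epm y) = 0 := fun y => by
    simpa using ContinuousLinearMap.ext_iff.mp h2 y
  have H4 : ∀ y, Rp (Ep y) = y := fun y => by
    simpa using ContinuousLinearMap.ext_iff.mp h4 y
  have H5 : ∀ x, E (P x) + Ep (Rp x) = x := fun x => by
    simpa using ContinuousLinearMap.ext_iff.mp h5 x
  have H7 : ∀ x, Em (P x) + Epm (Rp x) = 0 := fun x => by
    simpa using ContinuousLinearMap.ext_iff.mp h7 x
  have H8 : ∀ y, Em (Rm y) = y := fun y => by
    simpa using ContinuousLinearMap.ext_iff.mp h8 y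
  -- main: if Q is a two-sided inverse of Epm, then E - Ep Q Em is a two-sided inverse of P
  have main : ∀ Q : H₂ →L[ℂ] H₂, Epm.comp Q = 1 → Q.comp Epm = 1 →
      P.comp (E - Ep.comp (Q.comp Em)) = 1 ∧ (E - Ep.comp (Q.comp Em)).comp P = 1 := by
    intro Q hEQ hQE
    have hEQ' : ∀ y, Epm (Q y) = y := fun y => by
      simpa using ContinuousLinearMap.ext_iff.mp hEQ y
    have hQE' : ∀ y, Q (Epm y) = y := fun y => by
      simpa using ContinuousLinearMap.ext_iff.mp hQE y
    constructor
    · ext x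
      simp only [ContinuousLinearMap.comp_apply, ContinuousLinearMap.sub_apply, map_sub,
        ContinuousLinearMap.one_apply]
      have hz : P (Ep (Q (Em x))) = -(Rm (Em x)) := by
        have := eq_neg_of_add_eq_zero_left (H2 (Q (Em x)))
        rwa [hEQ'] at this
      rw [hz, sub_neg_eq_add, H1]
    · ext x
      simp only [ContinuousLinearMap.comp_apply, ContinuousLinearMap.sub_apply, map_sub,
        ContinuousLinearMap.one_apply]
      have hz : Q (Em (P x)) = -(Rp x) := by
        have h := eq_neg_of_add_eq_zero_left (H7 x)
        rw [h, map_neg, hQE']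
      rw [hz, map_neg, sub_neg_eq_add, H5]
  constructor
  · constructor
    · intro hP
      have hPS : ∀ x, P (Ring.inverse P x) = x := fun x => by
        simpa using ContinuousLinearMap.ext_iff.mp (Ring.mul_inverse_cancel P hP) x
      have hSP : ∀ x, Ring.inverse P (P x) = x := fun x => by
        simpa using ContinuousLinearMap.ext_iff.mp (Ring.inverse_mul_cancel P hP) x
      set S := Ring.inverse P with hS
      refine ⟨⟨Epm, -(Rp.comp (S.comp Rm)), ?_, ?_⟩, rfl⟩
      · rw [ContinuousLinearMap.mul_def]
        ext y
        simp only [ContinuousLinearMap.comp_apply, ContinuousLinearMap.neg_apply, map_neg,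
          ContinuousLinearMap.one_apply]
        have h := eq_neg_of_add_eq_zero_right (H7 (S (Rm y)))
        rw [h, hPS, H8, neg_neg]
      · rw [ContinuousLinearMap.mul_def]
        ext y
        simp only [ContinuousLinearMap.comp_apply, ContinuousLinearMap.neg_apply,
          ContinuousLinearMap.one_apply]
        have h := eq_neg_of_add_eq_zero_right (H2 y)
        rw [h, map_neg, hSP, map_neg, H4, neg_neg]
    · intro hEpm
      have hPA := main (Ring.inverse Epm)
        (by rw [← ContinuousLinearMap.mul_def]; exact Ring.mul_inverse_cancel Epm hEpm)
        (by rw [← ContinuousLinearMap.mul_def]; exact Ring.inverse_mul_cancel Epm hEpm)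
      exact ⟨⟨P, E - Ep.comp ((Ring.inverse Epm).comp Em),
        by rw [ContinuousLinearMap.mul_def]; exact hPA.1,
        by rw [ContinuousLinearMap.mul_def]; exact hPA.2⟩, rfl⟩
  · intro hEpm
    have hPA := main (Ring.inverse Epm)
      (by rw [← ContinuousLinearMap.mul_def]; exact Ring.mul_inverse_cancel Epm hEpm)
      (by rw [← ContinuousLinearMap.mul_def]; exact Ring.inverse_mul_cancel Epm hEpm)
    let u : (H₁ →L[ℂ] H₁)ˣ := ⟨P, E - Ep.comp ((Ring.inverse Epm).comp Em),
      by rw [ContinuousLinearMap.mul_def]; exact hPA.1,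
      by rw [ContinuousLinearMap.mul_def]; exact hPA.2⟩
    have : Ring.inverse (u : H₁ →L[ℂ] H₁) = ↑u⁻¹ := Ring.inverse_unit u
    exact this
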